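/- Let G be a connected chordal graph, and let U and U' be two units in the same bag of the layer structure (i.e., adjacent units in the same layer), with common parent P. Then for every edge KK' of C(G) with K in U and K' in U', there exists a maximal clique K'' contained in P that is adjacent in C(G) to both K and K'. -/

import Mathlib

open SimpleGraph

attribute [local instance] Classical.propDecidable
set_option linter.unusedSectionVars false

variable {V : Type*} [Fintype V] [DecidableEq V]

/-- A graph is chordal if it has no induced cycle of length at least 4. -/
def IsChordal (G : SimpleGraph V) : Prop :=
  ∀ n : ℕ, 4 ≤ n →
    ¬ ∃ f : Fin n ↪ V, ∀ i j, (cycleGraph n).Adj i j ↔ G.Adj (f i) (f j)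

/-- `K` is a maximal clique of `G`. -/
def MaxClique (G : SimpleGraph V) (K : Finset V) : Prop :=
  G.IsClique (K : Set V) ∧ ∀ K' : Finset V, G.IsClique (K' : Set V) → K ⊆ K' → K = K'

/-- The type of maximal cliques of `G`. -/
abbrev CV (G : SimpleGraph V) := {K : Finset V // MaxClique G K}

/-- `S` is a `u`-`v` separator of `G`: `u, v ∉ S` and every `u`-`v` walk meets `S`. -/
def Separates (G : SimpleGraph V) (S : Finset V) (u v : V) : Prop :=
  u ∉ S ∧ v ∉ S ∧ ∀ p : G.Walk u v, ∃ x ∈ p.support, x ∈ S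

lemma Separates.symm' {G : SimpleGraph V} {S : Finset V} {u v : V}
    (h : Separates G S u v) : Separates G S v u := by
  obtain ⟨hu, hv, h⟩ := h
  refine ⟨hv, hu, fun p => ?_⟩
  obtain ⟨x, hx, hxS⟩ := h p.reverse
  refine ⟨x, ?_, hxS⟩
  simpa using hx

/-- `S` is a minimal `u`-`v` separator of `G`. -/
def MinSeparates (G : SimpleGraph V) (S : Finset V) (u v : V) : Prop :=
  Separates G S u v ∧ ∀ S' : Finset V, S' ⊂ S → ¬ Separates G S' u v

lemma MinSeparates.symm' {G : SimpleGraph V} {S : Finset V} {u v : V}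
    (h : MinSeparates G S u v) : MinSeparates G S v u :=
  ⟨h.1.symm', fun S' hS' hc => h.2 S' hS' hc.symm'⟩

/-- The clique graph `C(G)` of `G`: vertices are the maximal cliques; `K` and `K'` are
adjacent iff `K ∩ K'` is a minimal `u`-`v` separator for all `u ∈ K \ K'`, `v ∈ K' \ K`. -/
def cliqueGraph (G : SimpleGraph V) : SimpleGraph (CV G) where
  Adj K K' := K ≠ K' ∧
    ∀ u ∈ K.1 \ K'.1, ∀ v ∈ K'.1 \ K.1, MinSeparates G (K.1 ∩ K'.1) u v
  symm := by
    constructor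
    rintro K K' ⟨hne, h⟩
    refine ⟨hne.symm, fun u hu v hv => ?_⟩
    rw [Finset.inter_comm]
    exact (h v hv u hu).symm'
  loopless := by constructor; rintro K ⟨hne, -⟩; exact hne rfl

/-- A clique tree of `G`: a tree on the maximal cliques of `G` such that for every vertex
`v`, the maximal cliques containing `v` induce a connected subgraph (a subtree). -/
def IsCliqueTree (G : SimpleGraph V) (T : SimpleGraph (CV G)) : Prop :=
  T.IsTree ∧ ∀ v : V, (T.induce {K : CV G | v ∈ K.1}).Connected

/-- `C(G) ⊖ S`: the clique graph with all edges labeled `S` deleted. -/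
def deleteLabel (G : SimpleGraph V) (S : Finset V) : SimpleGraph (CV G) where
  Adj K K' := (cliqueGraph G).Adj K K' ∧ K.1 ∩ K'.1 ≠ S
  symm := by
    constructor
    rintro K K' ⟨h, hS⟩
    exact ⟨h.symm, by rwa [Finset.inter_comm]⟩
  loopless := by constructor; rintro K ⟨h, -⟩; exact (cliqueGraph G).irrefl h

/-- `w` is the minimum edge weight of `C(G)` (weights are `|K ∩ K'|`). -/
def IsMinEdgeWeight (G : SimpleGraph V) (w : ℕ) : Prop :=
  (∃ K K' : CV G, (cliqueGraph G).Adj K K' ∧ (K.1 ∩ K'.1).card = w) ∧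
    ∀ K K' : CV G, (cliqueGraph G).Adj K K' → w ≤ (K.1 ∩ K'.1).card

/-- `C(G)` with all edges of (minimum) weight `w` deleted; its connected components are
the units. -/
def unitGraph (G : SimpleGraph V) (w : ℕ) : SimpleGraph (CV G) where
  Adj K K' := (cliqueGraph G).Adj K K' ∧ (K.1 ∩ K'.1).card ≠ w
  symm := by
    constructor
    rintro K K' ⟨h, hw⟩
    exact ⟨h.symm, by rwa [Finset.inter_comm]⟩
  loopless := by constructor; rintro K ⟨h, -⟩; exact (cliqueGraph G).irrefl h

/-- The type of units. -/
abbrev LUnit (G : SimpleGraph V) (w : ℕ) := (unitGraph G w).ConnectedComponent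

/-- The unit containing a maximal clique `K`. -/
def umk (G : SimpleGraph V) (w : ℕ) (K : CV G) : LUnit G w :=
  (unitGraph G w).connectedComponentMk K

/-- The layer structure: units are its vertices; two units are adjacent iff some
edge of `C(G)` crosses them. -/
def layerGraph (G : SimpleGraph V) (w : ℕ) : SimpleGraph (LUnit G w) where
  Adj U U' := U ≠ U' ∧ ∃ K K' : CV G,
    (cliqueGraph G).Adj K K' ∧ umk G w K = U ∧ umk G w K' = U'
  symm := by
    constructor
    rintro U U' ⟨hne, K, K', hadj, hK, hK'⟩
    exact ⟨hne.symm, K', K, hadj.symm, hK', hK⟩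
  loopless := by constructor; rintro U ⟨hne, -⟩; exact hne rfl

/-- All edges of `C(G)` crossing `U` and `U'` have the label `S`. -/
def CrossLabel (G : SimpleGraph V) (w : ℕ) (U U' : LUnit G w) (S : Finset V) : Prop :=
  ∀ K K' : CV G, (cliqueGraph G).Adj K K' → umk G w K = U → umk G w K' = U' →
    K.1 ∩ K'.1 = S

/-- `𝒱(U)`: the vertices of `G` contained in some maximal clique of the unit `U`. -/
def unitVerts (G : SimpleGraph V) (w : ℕ) (U : LUnit G w) : Set V :=
  {x | ∃ K : CV G, umk G w K = U ∧ x ∈ K.1}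

/-- An MCS ordering of `G`: at each step, the visited vertex has the maximum number of
already visited neighbors among unvisited vertices. -/
def IsMCSOrdering (G : SimpleGraph V) (σ : Fin (Fintype.card V) ≃ V) : Prop :=
  ∀ i j : Fin (Fintype.card V), i ≤ j →
    (Finset.univ.filter fun l => l < i ∧ G.Adj (σ l) (σ j)).card ≤
      (Finset.univ.filter fun l => l < i ∧ G.Adj (σ l) (σ i)).card

/-- A Prim ordering of `C(G)`: each vertex after the first is incident to an edge of
maximum weight among all edges between visited and unvisited vertices. -/
def IsPrimOrdering (G : SimpleGraph V) (π : Fin (Fintype.card (CV G)) ≃ CV G) : Prop :=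
  ∀ i : Fin (Fintype.card (CV G)), 0 < (i : ℕ) →
    ∃ j, j < i ∧ (cliqueGraph G).Adj (π j) (π i) ∧
      ∀ j' k, j' < i → i ≤ k → (cliqueGraph G).Adj (π j') (π k) →
        ((π j').1 ∩ (π k).1).card ≤ ((π j).1 ∩ (π i).1).card

/-- The position in `π` of the first maximal clique containing `x`. -/
noncomputable def firstIdx (G : SimpleGraph V)
    (π : Fin (Fintype.card (CV G)) ≃ CV G) (x : V) : ℕ :=
  sInf {j : ℕ | ∃ h : j < Fintype.card (CV G), x ∈ (π ⟨j, h⟩).1}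

/-- `σ` is a generation of `π`. -/
def IsGeneration (G : SimpleGraph V) (π : Fin (Fintype.card (CV G)) ≃ CV G)
    (σ : Fin (Fintype.card V) ≃ V) : Prop :=
  ∀ x y : V, firstIdx G π x < firstIdx G π y → σ.symm x < σ.symm y

/-- `σ` is a linear extension of the relation `R`. -/
def ExtendsR (R : V → V → Prop) (σ : Fin (Fintype.card V) ≃ V) : Prop :=
  ∀ x y : V, R x y → x ≠ y → σ.symm x < σ.symm y

/-- `π` respects `R`. -/
def RespectsR (G : SimpleGraph V) (R : V → V → Prop)
    (π : Fin (Fintype.card (CV G)) ≃ CV G) : Prop :=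
  ∀ x y : V, R x y → x ≠ y → firstIdx G π x ≤ firstIdx G π y

/-- The set of vertices of `G` contained in one of the first `i` cliques of `π`. -/
def primPrefixVerts (G : SimpleGraph V) (π : Fin (Fintype.card (CV G)) ≃ CV G)
    (i : ℕ) : Set V :=
  {x | ∃ j : Fin (Fintype.card (CV G)), (j : ℕ) < i ∧ x ∈ (π j).1}


section Aux14

variable {G : SimpleGraph V} {w : ℕ}

/-- `u` and `v` are joined by a walk avoiding `S`. -/
def avoidRel (G : SimpleGraph V) (S : Finset V) (u v : V) : Prop :=
  ∃ p : G.Walk u v, ∀ x ∈ p.support, x ∉ S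

lemma avoidRel.symm' {S : Finset V} {u v : V} (h : avoidRel G S u v) : avoidRel G S v u := by
  obtain ⟨p, hp⟩ := h
  exact ⟨p.reverse, fun x hx => hp x (by simpa using hx)⟩

lemma avoidRel.trans' {S : Finset V} {u v x : V} (h1 : avoidRel G S u v)
    (h2 : avoidRel G S v x) : avoidRel G S u x := by
  obtain ⟨p, hp⟩ := h1
  obtain ⟨q, hq⟩ := h2
  refine ⟨p.append q, fun y hy => ?_⟩
  rw [SimpleGraph.Walk.mem_support_append_iff] at hy
  rcases hy with hy | hy
  · exact hp y hy
  · exact hq y hy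

lemma avoidRel_clique {S : Finset V} (Z : CV G) {a b : V}
    (ha : a ∈ Z.1 \ S) (hb : b ∈ Z.1 \ S) : avoidRel G S a b := by
  rw [Finset.mem_sdiff] at ha hb
  by_cases hab : a = b
  · subst hab
    exact ⟨SimpleGraph.Walk.nil, by simpa using ha.2⟩
  · have hadj : G.Adj a b := Z.2.1 (Finset.mem_coe.mpr ha.1) (Finset.mem_coe.mpr hb.1) hab
    refine ⟨SimpleGraph.Walk.cons hadj SimpleGraph.Walk.nil, ?_⟩
    intro x hx
    simp only [SimpleGraph.Walk.support_cons, SimpleGraph.Walk.support_nil,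
      List.mem_cons, List.mem_singleton] at hx
    rcases hx with rfl | rfl | h
    · exact ha.2
    · exact hb.2
    · simp at h

lemma Separates.not_avoidRel {S : Finset V} {u v : V} (h : Separates G S u v) :
    ¬ avoidRel G S u v := by
  rintro ⟨p, hp⟩
  obtain ⟨x, hx, hxS⟩ := h.2.2 p
  exact hp x hx hxS

/-- For any edge of the clique graph and any maximal clique `Z`, `Z` is not contained
in the label of the edge. -/
lemma diff_ne {X Y : CV G} (h : (cliqueGraph G).Adj X Y) (Z : CV G) :
    ∃ z ∈ Z.1, z ∉ X.1 ∩ Y.1 := by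
  by_contra hc
  push_neg at hc
  have hZX : Z.1 ⊆ X.1 := fun z hz => (Finset.mem_inter.mp (hc z hz)).1
  have h1 : Z.1 = X.1 := Z.2.2 X.1 X.2.1 hZX
  have hXY' : X.1 ⊆ Y.1 := fun x hx => (Finset.mem_inter.mp (hc x (h1 ▸ hx))).2
  have h2 : X.1 = Y.1 := X.2.2 Y.1 Y.2.1 hXY'
  exact h.1 (Subtype.ext h2)

/-- A clique-graph edge crossing two distinct units has weight exactly `w`. -/
lemma cross_card (hw : IsMinEdgeWeight G w) {X Y : CV G}
    (h : (cliqueGraph G).Adj X Y) (hu : umk G w X ≠ umk G w Y) :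
    (X.1 ∩ Y.1).card = w := by
  by_contra hc
  exact hu (SimpleGraph.ConnectedComponent.sound
    (SimpleGraph.Adj.reachable (show (unitGraph G w).Adj X Y from ⟨h, hc⟩)))

lemma lemU_walk (hw : IsMinEdgeWeight G w) {S : Finset V} (hS : S.card = w)
    {A A' : CV G} (p : (unitGraph G w).Walk A A') :
    ∀ a ∈ A.1 \ S, ∀ a' ∈ A'.1 \ S, avoidRel G S a a' := by
  induction p with
  | nil => exact fun a ha a' ha' => avoidRel_clique _ ha ha'
  | @cons A Am A' h q ih =>
    intro a ha a' ha'
    have hcard : w < (A.1 ∩ Am.1).card := lt_of_le_of_ne (hw.2 A Am h.1) (Ne.symm h.2)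
    have hns : ¬ (A.1 ∩ Am.1 ⊆ S) := by
      intro hsub
      have := Finset.card_le_card hsub
      omega
    obtain ⟨x, hx, hxS⟩ := Finset.not_subset.mp hns
    have h1 : avoidRel G S a x :=
      avoidRel_clique A ha (Finset.mem_sdiff.mpr ⟨(Finset.mem_inter.mp hx).1, hxS⟩)
    have h2 := ih x (Finset.mem_sdiff.mpr ⟨(Finset.mem_inter.mp hx).2, hxS⟩) a' ha'
    exact h1.trans' h2

/-- Two maximal cliques in the same unit have all their `S`-avoiding vertices in the
same component of `G - S`, when `S` has the minimum weight `w`. -/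
lemma lemU (hw : IsMinEdgeWeight G w) {S : Finset V} (hS : S.card = w)
    {A A' : CV G} (h : umk G w A = umk G w A') :
    ∀ a ∈ A.1 \ S, ∀ a' ∈ A'.1 \ S, avoidRel G S a a' := by
  have hr : (unitGraph G w).Reachable A A' := SimpleGraph.ConnectedComponent.exact h
  obtain ⟨p⟩ := hr
  exact lemU_walk hw hS p

lemma keyLemma (hw : IsMinEdgeWeight G w) {K K' A B A' B'' : CV G}
    (hKK' : (cliqueGraph G).Adj K K')
    (hKU : umk G w K ≠ umk G w K')
    (hAB : (cliqueGraph G).Adj A B)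
    (hAK : umk G w A = umk G w K)
    (hBK : umk G w B ≠ umk G w K)
    (hBK' : umk G w B ≠ umk G w K')
    (hA'B'' : (cliqueGraph G).Adj A' B'')
    (hA'K' : umk G w A' = umk G w K')
    (hB''B : umk G w B'' = umk G w B) :
    ∀ β ∈ B.1 \ (K.1 ∩ K'.1), ∀ b ∈ K'.1 \ (K.1 ∩ K'.1),
      ¬ avoidRel G (K.1 ∩ K'.1) β b := by
  intro β hβ b hb hc2
  set S := K.1 ∩ K'.1 with hSdef
  have hScard : S.card = w := cross_card hw hKK' hKU
  obtain ⟨a₀, ha₀K, ha₀S⟩ := diff_ne hKK' K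
  have ha₀ : a₀ ∈ K.1 \ S := Finset.mem_sdiff.mpr ⟨ha₀K, ha₀S⟩
  have notMS : ∀ u ∈ K.1 \ S, ∀ v ∈ K'.1 \ S, ¬ avoidRel G S u v := by
    intro u hu v hv
    rw [Finset.mem_sdiff] at hu hv
    have hu' : u ∈ K.1 \ K'.1 := Finset.mem_sdiff.mpr
      ⟨hu.1, fun h => hu.2 (Finset.mem_inter.mpr ⟨hu.1, h⟩)⟩
    have hv' : v ∈ K'.1 \ K.1 := Finset.mem_sdiff.mpr
      ⟨hv.1, fun h => hv.2 (Finset.mem_inter.mpr ⟨h, hv.1⟩)⟩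
    exact (hKK'.2 u hu' v hv').1.not_avoidRel
  -- the crossing edge `A B` has label `S`
  have hABcard : (A.1 ∩ B.1).card = w := by
    refine cross_card hw hAB ?_
    rw [hAK]
    exact hBK.symm
  have hABsub : A.1 ∩ B.1 ⊆ S := by
    intro x hx
    by_contra hxS
    have hxA : x ∈ A.1 \ S := Finset.mem_sdiff.mpr ⟨(Finset.mem_inter.mp hx).1, hxS⟩
    have hxB : x ∈ B.1 \ S := Finset.mem_sdiff.mpr ⟨(Finset.mem_inter.mp hx).2, hxS⟩
    have h1 : avoidRel G S x a₀ := lemU hw hScard hAK x hxA a₀ ha₀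
    have h2 : avoidRel G S x β := avoidRel_clique B hxB hβ
    exact notMS a₀ ha₀ b hb (h1.symm'.trans' (h2.trans' hc2))
  have hABS : A.1 ∩ B.1 = S := Finset.eq_of_subset_of_card_le hABsub
    (by rw [hScard, hABcard])
  -- the other crossing edge, with label `T'`
  set T' := A'.1 ∩ B''.1 with hT'def
  have hT'card : T'.card = w := by
    refine cross_card hw hA'B'' ?_
    rw [hA'K', hB''B]
    exact hBK'.symm
  have sep3 : ∀ u ∈ A'.1 \ T', ∀ v ∈ B''.1 \ T', ¬ avoidRel G T' u v := by
    intro u hu v hv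
    rw [Finset.mem_sdiff] at hu hv
    have hu' : u ∈ A'.1 \ B''.1 := Finset.mem_sdiff.mpr
      ⟨hu.1, fun h => hu.2 (Finset.mem_inter.mpr ⟨hu.1, h⟩)⟩
    have hv' : v ∈ B''.1 \ A'.1 := Finset.mem_sdiff.mpr
      ⟨hv.1, fun h => hv.2 (Finset.mem_inter.mpr ⟨h, hv.1⟩)⟩
    exact (hA'B''.2 u hu' v hv').1.not_avoidRel
  obtain ⟨α', hα'1, hα'2⟩ := diff_ne hA'B'' A'
  obtain ⟨β'', hβ''1, hβ''2⟩ := diff_ne hA'B'' B''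
  have hα' : α' ∈ A'.1 \ T' := Finset.mem_sdiff.mpr ⟨hα'1, hα'2⟩
  have hβ''m : β'' ∈ B''.1 \ T' := Finset.mem_sdiff.mpr ⟨hβ''1, hβ''2⟩
  have hST'F : S ≠ T' := by
    intro hST'
    have h1 : avoidRel G S α' b := lemU hw hScard hA'K' α' (hST' ▸ hα') b hb
    have h2 : avoidRel G S β'' β := lemU hw hScard hB''B β'' (hST' ▸ hβ''m) β hβ
    have h3 : avoidRel G T' α' β'' := hST' ▸ (h1.trans' (hc2.symm'.trans' h2.symm'))
    exact sep3 α' hα' β'' hβ''m h3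
  obtain ⟨κ, hκ1, hκ2⟩ := diff_ne hA'B'' K
  obtain ⟨κ', hκ'1, hκ'2⟩ := diff_ne hA'B'' K'
  have hκ : κ ∈ K.1 \ T' := Finset.mem_sdiff.mpr ⟨hκ1, hκ2⟩
  have hκ' : κ' ∈ K'.1 \ T' := Finset.mem_sdiff.mpr ⟨hκ'1, hκ'2⟩
  -- E₁ = E₂
  have c22 : avoidRel G T' κ κ' := by
    by_contra hn
    have hsub : S ⊆ T' := by
      intro x hxS
      by_contra hxT'
      have hx1 : x ∈ K.1 \ T' := Finset.mem_sdiff.mpr ⟨(Finset.mem_inter.mp hxS).1, hxT'⟩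
      have hx2 : x ∈ K'.1 \ T' := Finset.mem_sdiff.mpr ⟨(Finset.mem_inter.mp hxS).2, hxT'⟩
      exact hn ((avoidRel_clique K hκ hx1).trans' (avoidRel_clique K' hx2 hκ'))
    exact hST'F (Finset.eq_of_subset_of_card_le hsub (by rw [hScard, hT'card]))
  obtain ⟨α₀, hα₀1, hα₀2⟩ := diff_ne hA'B'' A
  obtain ⟨βB, hβB1, hβB2⟩ := diff_ne hA'B'' B
  have hα₀ : α₀ ∈ A.1 \ T' := Finset.mem_sdiff.mpr ⟨hα₀1, hα₀2⟩
  have hβB : βB ∈ B.1 \ T' := Finset.mem_sdiff.mpr ⟨hβB1, hβB2⟩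
  -- E₁ = E₃
  have c23 : avoidRel G T' α₀ βB := by
    by_contra hn
    have hsub : S ⊆ T' := by
      rw [← hABS]
      intro x hxAB
      by_contra hxT'
      have hx1 : x ∈ A.1 \ T' := Finset.mem_sdiff.mpr ⟨(Finset.mem_inter.mp hxAB).1, hxT'⟩
      have hx2 : x ∈ B.1 \ T' := Finset.mem_sdiff.mpr ⟨(Finset.mem_inter.mp hxAB).2, hxT'⟩
      exact hn ((avoidRel_clique A hα₀ hx1).trans' (avoidRel_clique B hx2 hβB))
    exact hST'F (Finset.eq_of_subset_of_card_le hsub (by rw [hScard, hT'card]))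
  have ch1 : avoidRel G T' α' κ' := lemU hw hT'card hA'K' α' hα' κ' hκ'
  have ch2 : avoidRel G T' κ α₀ := lemU hw hT'card hAK.symm κ hκ α₀ hα₀
  have ch3 : avoidRel G T' βB β'' := lemU hw hT'card hB''B.symm βB hβB β'' hβ''m
  exact sep3 α' hα' β'' hβ''m
    (ch1.trans' (c22.symm'.trans' (ch2.trans' (c23.trans' ch3))))

end Aux14

/-- for adjacent units `U, U'` in the same layer with common parent `P`,
every crossing edge `KK'` of `C(G)` admits a maximal clique `K''` in `P` adjacent in
`C(G)` to both `K` and `K'`. -/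
theorem stmt14 (G : SimpleGraph V) (hG : G.Connected) (hch : IsChordal G)
    (w : ℕ) (hw : IsMinEdgeWeight G w) (Kstar : CV G) (i : ℕ) (hi : 1 ≤ i)
    (U U' P : LUnit G w)
    (hU : (layerGraph G w).dist (umk G w Kstar) U = i)
    (hU' : (layerGraph G w).dist (umk G w Kstar) U' = i)
    (hUU' : (layerGraph G w).Adj U U')
    (hP : (layerGraph G w).dist (umk G w Kstar) P = i - 1)
    (hUP : (layerGraph G w).Adj U P) (hU'P : (layerGraph G w).Adj U' P) :
    ∀ K K' : CV G, (cliqueGraph G).Adj K K' → umk G w K = U → umk G w K' = U' →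
      ∃ K'' : CV G, umk G w K'' = P ∧
        (cliqueGraph G).Adj K'' K ∧ (cliqueGraph G).Adj K'' K' := by
  intro K K' hadj hKU hK'U'
  obtain ⟨hUPne, A, B, hAB, hAU, hBP⟩ := hUP
  obtain ⟨hU'Pne, A', B'', hA'B'', hA'U', hB''P⟩ := hU'P
  have hKK'u : umk G w K ≠ umk G w K' := by rw [hKU, hK'U']; exact hUU'.1
  have hAK : umk G w A = umk G w K := by rw [hAU, hKU]
  have hA'K' : umk G w A' = umk G w K' := by rw [hA'U', hK'U']
  have hBK : umk G w B ≠ umk G w K := by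
    rw [hBP, hKU]; exact fun h => hUPne h.symm
  have hBK' : umk G w B ≠ umk G w K' := by
    rw [hBP, hK'U']; exact fun h => hU'Pne h.symm
  have hB''B : umk G w B'' = umk G w B := by rw [hB''P, hBP]
  -- the two "side" exclusions
  have key2 := keyLemma hw hadj hKK'u hAB hAK hBK hBK' hA'B'' hA'K' hB''B
  have key1' := keyLemma hw hadj.symm hKK'u.symm hA'B'' hA'K'
    (by rw [hB''B]; exact hBK') (by rw [hB''B]; exact hBK) hAB hAK hB''B.symm
  rw [Finset.inter_comm] at key1'
  set S := K.1 ∩ K'.1 with hSdef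
  have hScard : S.card = w := cross_card hw hadj hKK'u
  obtain ⟨β''₀, hβ''₀1, hβ''₀2⟩ := diff_ne hadj B''
  have hβ''₀ : β''₀ ∈ B''.1 \ S := Finset.mem_sdiff.mpr ⟨hβ''₀1, hβ''₀2⟩
  obtain ⟨a₀, ha₀1, ha₀2⟩ := diff_ne hadj K
  have ha₀ : a₀ ∈ K.1 \ S := Finset.mem_sdiff.mpr ⟨ha₀1, ha₀2⟩
  obtain ⟨b₀, hb₀1, hb₀2⟩ := diff_ne hadj K'
  have hb₀ : b₀ ∈ K'.1 \ S := Finset.mem_sdiff.mpr ⟨hb₀1, hb₀2⟩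
  have key1 : ∀ β ∈ B.1 \ S, ∀ a ∈ K.1 \ S, ¬ avoidRel G S β a := by
    intro β hβ a ha hc
    have h1 : avoidRel G S β''₀ β := lemU hw hScard hB''B β''₀ hβ''₀ β hβ
    exact key1' β''₀ hβ''₀ a ha (h1.trans' hc)
  have hSK : S ⊆ K.1 := Finset.inter_subset_left
  have hSK' : S ⊆ K'.1 := Finset.inter_subset_right
  -- the crossing edge `A B` has label `S`, so `S ⊆ B`
  have hABcard : (A.1 ∩ B.1).card = w := by
    refine cross_card hw hAB ?_
    rw [hAK]; exact hBK.symm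
  have hABS : A.1 ∩ B.1 = S := by
    refine Finset.eq_of_subset_of_card_le ?_ (by rw [hScard, hABcard])
    intro x hx
    by_contra hxS
    have hxA : x ∈ A.1 \ S := Finset.mem_sdiff.mpr ⟨(Finset.mem_inter.mp hx).1, hxS⟩
    have hxB : x ∈ B.1 \ S := Finset.mem_sdiff.mpr ⟨(Finset.mem_inter.mp hx).2, hxS⟩
    exact key1 x hxB a₀ ha₀ ((lemU hw hScard hAK x hxA a₀ ha₀).symm'.symm')
  have hSB : S ⊆ B.1 := hABS ▸ Finset.inter_subset_right
  -- `B ∩ K = S` and `B ∩ K' = S`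
  have hBKS : B.1 ∩ K.1 = S := by
    refine Finset.Subset.antisymm ?_ (fun s hs => Finset.mem_inter.mpr ⟨hSB hs, hSK hs⟩)
    intro x hx
    by_contra hxS
    have hxB : x ∈ B.1 \ S := Finset.mem_sdiff.mpr ⟨(Finset.mem_inter.mp hx).1, hxS⟩
    have hxK : x ∈ K.1 \ S := Finset.mem_sdiff.mpr ⟨(Finset.mem_inter.mp hx).2, hxS⟩
    exact key1 x hxB a₀ ha₀ (avoidRel_clique K hxK ha₀)
  have hBK'S : B.1 ∩ K'.1 = S := by
    refine Finset.Subset.antisymm ?_ (fun s hs => Finset.mem_inter.mpr ⟨hSB hs, hSK' hs⟩)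
    intro x hx
    by_contra hxS
    have hxB : x ∈ B.1 \ S := Finset.mem_sdiff.mpr ⟨(Finset.mem_inter.mp hx).1, hxS⟩
    have hxK' : x ∈ K'.1 \ S := Finset.mem_sdiff.mpr ⟨(Finset.mem_inter.mp hx).2, hxS⟩
    exact key2 x hxB b₀ hb₀ (avoidRel_clique K' hxK' hb₀)
  -- generic construction of the adjacencies
  have mkAdj : ∀ (Z : CV G), B ≠ Z → B.1 ∩ Z.1 = S → S ⊆ Z.1 →
      (∀ u ∈ B.1 \ S, ∀ v ∈ Z.1 \ S, ¬ avoidRel G S u v) → (cliqueGraph G).Adj B Z := by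
    intro Z hne hBZ hSZ hsep
    refine ⟨hne, ?_⟩
    intro u hu v hv
    rw [Finset.mem_sdiff] at hu hv
    have huS : u ∉ S := fun h => hu.2 (hSZ h)
    have hvS : v ∉ S := fun h => hv.2 (hSB h)
    have hu' : u ∈ B.1 \ S := Finset.mem_sdiff.mpr ⟨hu.1, huS⟩
    have hv' : v ∈ Z.1 \ S := Finset.mem_sdiff.mpr ⟨hv.1, hvS⟩
    rw [hBZ]
    refine ⟨⟨huS, hvS, ?_⟩, ?_⟩
    · intro p
      by_contra hp
      push_neg at hp
      exact hsep u hu' v hv' ⟨p, hp⟩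
    · rintro S' hS' ⟨hu'', hv'', hsep'⟩
      obtain ⟨s, hsS, hsS'⟩ := Finset.exists_of_ssubset hS'
      have hS'sub : S' ⊆ S := hS'.1
      have h1 : G.Adj u s := B.2.1 (Finset.mem_coe.mpr hu.1) (Finset.mem_coe.mpr (hSB hsS))
        (fun h => huS (h ▸ hsS))
      have h2 : G.Adj s v := Z.2.1 (Finset.mem_coe.mpr (hSZ hsS)) (Finset.mem_coe.mpr hv.1)
        (fun h => hvS (h ▸ hsS))
      obtain ⟨x, hx, hxS'⟩ := hsep' (SimpleGraph.Walk.cons h1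
        (SimpleGraph.Walk.cons h2 SimpleGraph.Walk.nil))
      simp only [SimpleGraph.Walk.support_cons, SimpleGraph.Walk.support_nil,
        List.mem_cons, List.mem_singleton] at hx
      rcases hx with rfl | rfl | rfl | h
      · exact huS (hS'sub hxS')
      · exact hsS' hxS'
      · exact hvS (hS'sub hxS')
      · simp at h
  have hBneK : B ≠ K := fun h => hBK (congrArg (umk G w) h)
  have hBneK' : B ≠ K' := fun h => hBK' (congrArg (umk G w) h)
  exact ⟨B, hBP, mkAdj K hBneK hBKS hSK (fun u hu v hv => key1 u hu v hv),
    mkAdj K' hBneK' hBK'S hSK' (fun u hu v hv => key2 u hu v hv)⟩
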